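/- Let D be a Q-algebra which is a 2-dimensional Q-vector space, and let O be an order (a subring that is a full-rank Z-lattice) of D. If O ⊗ Z/2Z is isomorphic as an F₂-algebra to F₄, then D is a quadratic field (i.e., D has no zero divisors). -/

import Mathlib

open TensorProduct

private lemma lemA {D : Type} [Ring D] [Algebra ℚ D] (O : Subring D)
    (hfull : Submodule.span ℚ (O : Set D) = ⊤) (x : D) :
    ∃ n : ℤ, n ≠ 0 ∧ n • x ∈ O := by
  have hx : x ∈ Submodule.span ℚ (O : Set D) := by rw [hfull]; trivial
  induction hx using Submodule.span_induction with
  | mem z h => exact ⟨1, one_ne_zero, by simpa using h⟩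
  | zero => exact ⟨1, one_ne_zero, by simpa using O.zero_mem⟩
  | add z w _ _ ihz ihw =>
      obtain ⟨n, hn, hnz⟩ := ihz
      obtain ⟨m, hm, hmw⟩ := ihw
      refine ⟨n * m, mul_ne_zero hn hm, ?_⟩
      have h : (n * m) • (z + w) = m • (n • z) + n • (m • w) := by
        rw [smul_add, smul_smul, smul_smul, mul_comm m n]
      rw [h]
      exact add_mem (zsmul_mem hnz m) (zsmul_mem hmw n)
  | smul q z _ ih =>
      obtain ⟨n, hn, hnz⟩ := ih
      refine ⟨n * q.den, mul_ne_zero hn (by exact_mod_cast q.den_nz), ?_⟩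
      have h : (n * (q.den : ℤ)) • (q • z) = q.num • (n • z) := by
        rw [← Int.cast_smul_eq_zsmul ℚ (n * q.den), ← Int.cast_smul_eq_zsmul ℚ q.num,
          ← Int.cast_smul_eq_zsmul ℚ n, smul_smul, smul_smul]
        congr 1
        push_cast
        rw [mul_assoc, mul_comm (q.den : ℚ) q, Rat.mul_den_eq_num]
        ring
      rw [h]
      exact zsmul_mem hnz q.num

private lemma lemB {M : Type} [AddCommGroup M] (b : Module.Basis (Fin 2) ℤ M) :
    ∀ a : M, a ≠ 0 → ∃ (k : ℕ) (a' : M), a = (2:ℤ)^k • a' ∧ ∃ i, ¬ ((2:ℤ) ∣ b.repr a' i) := by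
  suffices H : ∀ N : ℕ, ∀ a : M, (b.repr a 0).natAbs + (b.repr a 1).natAbs ≤ N → a ≠ 0 →
      ∃ (k : ℕ) (a' : M), a = (2:ℤ)^k • a' ∧ ∃ i, ¬ ((2:ℤ) ∣ b.repr a' i) by
    exact fun a ha => H _ a le_rfl ha
  intro N
  induction N using Nat.strong_induction_on with
  | _ N ih =>
    intro a hN ha
    by_cases hodd : ∃ i, ¬ ((2:ℤ) ∣ b.repr a i)
    · exact ⟨0, a, by simp, hodd⟩
    · push_neg at hodd
      obtain ⟨d0, h0⟩ := hodd 0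
      obtain ⟨d1, h1⟩ := hodd 1
      set a' : M := d0 • b 0 + d1 • b 1 with ha'def
      have hr0 : b.repr a' 0 = d0 := by
        simp [ha'def, Finsupp.single_apply]
      have hr1 : b.repr a' 1 = d1 := by
        simp [ha'def, Finsupp.single_apply]
      have key : a = (2:ℤ) • a' := by
        apply b.repr.injective
        ext i
        fin_cases i
        · simp [hr0, h0]
        · simp [hr1, h1]
      have ha'ne : a' ≠ 0 := by
        intro h
        exact ha (by rw [key, h, smul_zero])
      have hd : d0 ≠ 0 ∨ d1 ≠ 0 := by
        by_contra hcon
        push_neg at hcon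
        exact ha'ne (by rw [ha'def, hcon.1, hcon.2]; simp)
      have hpos : 0 < d0.natAbs + d1.natAbs := by
        rcases hd with h | h
        · have := Int.natAbs_pos.mpr h; omega
        · have := Int.natAbs_pos.mpr h; omega
      have heq : (b.repr a 0).natAbs + (b.repr a 1).natAbs
          = 2 * (d0.natAbs + d1.natAbs) := by
        rw [h0, h1, Int.natAbs_mul, Int.natAbs_mul]
        simp
        ring
      have hlt : (b.repr a' 0).natAbs + (b.repr a' 1).natAbs < N := by
        rw [hr0, hr1]
        omega
      obtain ⟨k, a'', hk1, hk2⟩ := ih _ hlt a' le_rfl ha'ne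
      refine ⟨k + 1, a'', ?_, hk2⟩
      rw [key, hk1, smul_smul, pow_succ']

/-- Let `D` be a `ℚ`-algebra which is a 2-dimensional `ℚ`-vector space, and let
`O` be an order (a subring that is a full-rank `ℤ`-lattice) of `D`.  If `O ⊗ ℤ/2ℤ` is
isomorphic as an `𝔽₂`-algebra to `𝔽₄`, then `D` has no zero divisors. -/
theorem stmt1 (D : Type) [Ring D] [Algebra ℚ D] (hdim : Module.finrank ℚ D = 2)
    (O : Subring D) (b : Module.Basis (Fin 2) ℤ O)
    (hfull : Submodule.span ℚ (O : Set D) = ⊤)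
    (h4 : Nonempty ((O ⊗[ℤ] ZMod 2) ≃+* GaloisField 2 2)) :
    ∀ x y : D, x * y = 0 → x = 0 ∨ y = 0 := by
  obtain ⟨e⟩ := h4
  -- torsion-freeness of O
  have tf : ∀ (z : O) (n : ℤ), n ≠ 0 → n • z = 0 → z = 0 := by
    intro z n hn h
    have h1 : ((n • z : O) : D) = 0 := by rw [h]; rfl
    have h2 : n • (z : D) = 0 := by rw [← h1]; push_cast; ring_nf
    have h3 : (n : ℚ) • (z : D) = 0 := by rw [Int.cast_smul_eq_zsmul]; exact h2
    rcases smul_eq_zero.mp h3 with h4 | h4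
    · exact absurd h4 (by exact_mod_cast hn)
    · exact Subtype.ext h4
  -- the ring hom O → O ⊗ ZMod 2
  let f : O →+* (O ⊗[ℤ] ZMod 2) := Algebra.TensorProduct.includeLeftRingHom
  -- coordinate functionals on the tensor product
  have key1 : ∀ a : O, f a = 0 → ∀ i, (2:ℤ) ∣ b.repr a i := by
    intro a h i
    let ψ : (O ⊗[ℤ] ZMod 2) →ₗ[ℤ] ZMod 2 :=
      TensorProduct.lift ((LinearMap.mul ℤ (ZMod 2)).comp
        ((Algebra.linearMap ℤ (ZMod 2)).comp (b.coord i)))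
    have hψ : ψ (f a) = ((b.repr a i : ℤ) : ZMod 2) := by
      have hfa' : f a = a ⊗ₜ[ℤ] (1 : ZMod 2) := rfl
      rw [hfa']
      simp [ψ, f, Algebra.TensorProduct.includeLeftRingHom, TensorProduct.lift.tmul,
        LinearMap.mul_apply', Algebra.linearMap_apply, Module.Basis.coord_apply,
        algebraMap_int_eq, eq_intCast]
      erw [TensorProduct.lift.tmul]
      simp
    rw [h, map_zero] at hψ
    have := (ZMod.intCast_zmod_eq_zero_iff_dvd (b.repr a i) 2).mp hψ.symm
    exact_mod_cast this
  intro x y hxy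
  by_contra hc
  push_neg at hc
  obtain ⟨hx, hy⟩ := hc
  obtain ⟨n, hn, hnx⟩ := lemA O hfull x
  obtain ⟨m, hm, hmy⟩ := lemA O hfull y
  set a : O := ⟨n • x, hnx⟩ with ha_def
  set c : O := ⟨m • y, hmy⟩ with hc_def
  have ha : a ≠ 0 := by
    intro h
    apply hx
    have h1 : n • x = 0 := congrArg Subtype.val h
    have h2 : (n : ℚ) • x = 0 := by rw [Int.cast_smul_eq_zsmul]; exact h1
    rcases smul_eq_zero.mp h2 with h3 | h3
    · exact absurd h3 (by exact_mod_cast hn)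
    · exact h3
  have hcne : c ≠ 0 := by
    intro h
    apply hy
    have h1 : m • y = 0 := congrArg Subtype.val h
    have h2 : (m : ℚ) • y = 0 := by rw [Int.cast_smul_eq_zsmul]; exact h1
    rcases smul_eq_zero.mp h2 with h3 | h3
    · exact absurd h3 (by exact_mod_cast hm)
    · exact h3
  have hprod : a * c = 0 := by
    apply Subtype.ext
    show (n • x) * (m • y) = 0
    rw [smul_mul_assoc, mul_smul_comm, hxy, smul_zero, smul_zero]
  obtain ⟨j, a1, haj, i1, hi1⟩ := lemB b a ha
  obtain ⟨k, c1, hck, i2, hi2⟩ := lemB b c hcne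
  have hp1 : a1 * c1 = 0 := by
    apply tf _ ((2:ℤ)^(j+k)) (pow_ne_zero _ two_ne_zero)
    have : ((2:ℤ)^j • a1) * ((2:ℤ)^k • c1) = 0 := by rw [← haj, ← hck, hprod]
    rw [smul_mul_assoc, mul_smul_comm, smul_smul, ← pow_add] at this
    exact this
  have hfz : e (f a1) * e (f c1) = 0 := by
    rw [← map_mul, ← map_mul, hp1, map_zero, map_zero]
  rcases mul_eq_zero.mp hfz with h | h
  · have hfa : f a1 = 0 := by
      apply e.injective
      rw [h, map_zero]
    exact hi1 (key1 a1 hfa i1)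
  · have hfc : f c1 = 0 := by
      apply e.injective
      rw [h, map_zero]
    exact hi2 (key1 c1 hfc i2)
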